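/- (Lemma 1) Let b satisfy deg b = 2 and F_b ≠ ∅, and let Γ be a subset of the vertex set of a single connected component of the induced subgraph G(Δ̄_b). Then the Γ-marginal is uniquely determined by b: all tables n ∈ F_b have the same Γ-marginal n_Γ. -/
import Mathlib


open Finset

variable {m : ℕ}

/-- The set of cells of an `m`-way contingency table with `I δ` levels for variable `δ`. -/
abbrev Cell (I : Fin m → ℕ) := ∀ δ : Fin m, Fin (I δ)

/-- Marginal cells for a subset `D` of the variables. -/
abbrev PCell (I : Fin m → ℕ) (D : Finset (Fin m)) := ∀ δ : {x // x ∈ D}, Fin (I δ.1)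

/-- Restriction of a cell to the variables in `D`. -/
def restrictC (I : Fin m → ℕ) (D : Finset (Fin m)) (i : Cell I) : PCell I D :=
  fun δ => i δ.1

/-- The `D`-marginal of a contingency table `n`. -/
def margin (I : Fin m → ℕ) (n : Cell I → ℕ) (D : Finset (Fin m)) (f : PCell I D) : ℕ :=
  ∑ i : Cell I, if restrictC I D i = f then n i else 0

/-- The fiber of `b = A n₀`, i.e. all tables sharing all `D`-marginals, `D ∈ 𝒟`, with `n₀`. -/
def fiber (I : Fin m → ℕ) (𝒟 : Finset (Finset (Fin m))) (n₀ : Cell I → ℕ) :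
    Set (Cell I → ℕ) :=
  {n | ∀ D ∈ 𝒟, ∀ f : PCell I D, margin I n D f = margin I n₀ D f}

/-- Sample size (total frequency) of a table. -/
def total (I : Fin m → ℕ) (n : Cell I → ℕ) : ℕ := ∑ i : Cell I, n i

/-- The one-dimensional marginal of `n` for variable `δ` at level `v`. -/
def margin1 (I : Fin m → ℕ) (n : Cell I → ℕ) (δ : Fin m) (v : Fin (I δ)) : ℕ :=
  ∑ i : Cell I, if i δ = v then n i else 0

/-- For a degree two fiber represented by `n₀`, variable `δ` is degenerate if a single
level has one-dimensional marginal `2`. -/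
def Degenerate (I : Fin m → ℕ) (n₀ : Cell I → ℕ) (δ : Fin m) : Prop :=
  ∃ v : Fin (I δ), margin1 I n₀ δ v = 2

/-- Variable `δ` is non-degenerate if two distinct levels each have one-dimensional
marginal `1`. -/
def Nondegenerate (I : Fin m → ℕ) (n₀ : Cell I → ℕ) (δ : Fin m) : Prop :=
  ∃ v w : Fin (I δ), v ≠ w ∧ margin1 I n₀ δ v = 1 ∧ margin1 I n₀ δ w = 1

/-- The independence graph of a generating class `𝒟`: an edge between two distinct
variables iff some `D ∈ 𝒟` contains both. -/
def indepGraph (𝒟 : Finset (Finset (Fin m))) : SimpleGraph (Fin m) :=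
  SimpleGraph.fromRel (fun a b => ∃ D ∈ 𝒟, a ∈ D ∧ b ∈ D)

/-- The set of non-degenerate variables `Δ̄_b`. -/
def ndSet (I : Fin m → ℕ) (n₀ : Cell I → ℕ) : Set (Fin m) :=
  {δ | Nondegenerate I n₀ δ}


lemma exists_pair_aux {α : Type*} [Fintype α] [DecidableEq α] (f : α → ℕ)
    (h : ∑ i, f i = 2) :
    ∃ x y, ∀ i, f i = (if i = x then 1 else 0) + (if i = y then 1 else 0) := by
  have hx : ∃ x, f x ≠ 0 := by
    by_contra hc
    push_neg at hc
    simp [hc] at h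
  obtain ⟨x, hx⟩ := hx
  have hle : f x ≤ 2 := h ▸ Finset.single_le_sum (fun i _ => Nat.zero_le _) (mem_univ x)
  have hsplit : f x + ∑ i ∈ univ.erase x, f i = 2 := by
    rw [Finset.add_sum_erase _ _ (mem_univ x)]; exact h
  interval_cases hfx : f x
  · omega
  · -- f x = 1, find second element
    have h1 : ∑ i ∈ univ.erase x, f i = 1 := by omega
    have hy : ∃ y ∈ univ.erase x, f y ≠ 0 := by
      by_contra hc
      push_neg at hc
      rw [Finset.sum_eq_zero hc] at h1; omega
    obtain ⟨y, hy, hfy⟩ := hy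
    have hyle : f y ≤ 1 := h1 ▸ Finset.single_le_sum (fun i _ => Nat.zero_le _) hy
    have hfy1 : f y = 1 := by omega
    have hz : ∑ i ∈ (univ.erase x).erase y, f i = 0 := by
      have := Finset.add_sum_erase _ f hy
      omega
    refine ⟨x, y, fun i => ?_⟩
    have hyx : y ≠ x := (Finset.mem_erase.mp hy).1
    by_cases hix : i = x
    · subst hix; simp [Ne.symm hyx, hfx]
    · by_cases hiy : i = y
      · subst hiy; simp [hix, hfy1]
      · have : f i = 0 := by
          refine Finset.sum_eq_zero_iff.mp hz i ?_
          simp [Finset.mem_erase, hix, hiy]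
        simp [hix, hiy, this]
  · -- f x = 2
    have hz2 : ∑ i ∈ univ.erase x, f i = 0 := by omega
    refine ⟨x, x, fun i => ?_⟩
    by_cases hix : i = x
    · subst hix; simp [hfx]
    · have : f i = 0 :=
        Finset.sum_eq_zero_iff.mp hz2 i (by simp [hix])
      simp [hix, this]

lemma pair_eq_aux {β : Type*} [DecidableEq β] {x y x' y' : β}
    (h : ∀ f : β, (if x = f then 1 else 0) + (if y = f then 1 else 0)
        = (if x' = f then 1 else 0) + (if y' = f then 1 else 0)) :
    (x = x' ∧ y = y') ∨ (x = y' ∧ y = x') := by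
  by_cases hxx : x = x'
  · subst hxx
    have hy := h y
    simp only [if_pos rfl] at hy
    by_cases hyy : y' = y
    · exact Or.inl ⟨rfl, hyy.symm⟩
    · rw [if_neg hyy] at hy
      split_ifs at hy <;> omega
  · have hx := h x
    rw [if_pos rfl, if_neg (fun hh : x' = x => hxx hh.symm)] at hx
    have hy'x : y' = x := by
      by_cases c : y' = x
      · exact c
      · rw [if_neg c] at hx; split_ifs at hx <;> omega
    have hyx : y ≠ x := by
      intro c; rw [if_pos c, if_pos hy'x] at hx; omega
    have hy := h y
    rw [if_pos rfl, if_neg (fun c : x = y => hyx c.symm),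
        if_neg (fun c : y' = y => hyx (hy'x ▸ c).symm)] at hy
    have hx'y : x' = y := by
      by_cases c : x' = y
      · exact c
      · rw [if_neg c] at hy; omega
    exact Or.inr ⟨hy'x.symm, hx'y.symm⟩

lemma reach_iff {V : Type*} {G : SimpleGraph V} (P : V → Prop)
    (hstep : ∀ u v, G.Adj u v → (P u ↔ P v)) {a b : V} (hr : G.Reachable a b) :
    P a ↔ P b := by
  obtain ⟨w⟩ := hr
  induction w with
  | nil => rfl
  | cons hadj p ih => exact (hstep _ _ hadj).trans ih

lemma margin_pair (I : Fin m → ℕ) (D : Finset (Fin m)) (n : Cell I → ℕ) (x y : Cell I)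
    (hn : ∀ i, n i = (if i = x then 1 else 0) + (if i = y then 1 else 0)) (f : PCell I D) :
    margin I n D f = (if restrictC I D x = f then 1 else 0)
      + (if restrictC I D y = f then 1 else 0) := by
  unfold margin
  have key : ∀ i : Cell I, (if restrictC I D i = f then n i else 0)
      = (if i = x then (if restrictC I D x = f then 1 else 0) else 0)
      + (if i = y then (if restrictC I D y = f then 1 else 0) else 0) := by
    intro i
    rw [hn i]
    by_cases hx : i = x <;> by_cases hy : i = y
    · subst hx; subst hy; simp; split_ifs <;> simp
    · subst hx; simp [hy]
    · subst hy; simp [hx]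
    · simp [hx, hy]
  rw [Finset.sum_congr rfl (fun i _ => key i), Finset.sum_add_distrib,
    Finset.sum_ite_eq' univ x, Finset.sum_ite_eq' univ y]
  simp

lemma margin1_pair (I : Fin m → ℕ) (δ : Fin m) (n : Cell I → ℕ) (x y : Cell I)
    (hn : ∀ i, n i = (if i = x then 1 else 0) + (if i = y then 1 else 0)) (v : Fin (I δ)) :
    margin1 I n δ v = (if x δ = v then 1 else 0) + (if y δ = v then 1 else 0) := by
  unfold margin1
  have key : ∀ i : Cell I, (if i δ = v then n i else 0)
      = (if i = x then (if x δ = v then 1 else 0) else 0)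
      + (if i = y then (if y δ = v then 1 else 0) else 0) := by
    intro i
    rw [hn i]
    by_cases hx : i = x <;> by_cases hy : i = y
    · subst hx; subst hy; simp; split_ifs <;> simp
    · subst hx; simp [hy]
    · subst hy; simp [hx]
    · simp [hx, hy]
  rw [Finset.sum_congr rfl (fun i _ => key i), Finset.sum_add_distrib,
    Finset.sum_ite_eq' univ x, Finset.sum_ite_eq' univ y]
  simp

lemma fiber_disj (I : Fin m → ℕ) (𝒟 : Finset (Finset (Fin m))) (n₀ p q : Cell I → ℕ)
    (hp : p ∈ fiber I 𝒟 n₀) (hq : q ∈ fiber I 𝒟 n₀) (a b a' b' : Cell I)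
    (ha : ∀ i, p i = (if i = a then 1 else 0) + (if i = b then 1 else 0))
    (hb : ∀ i, q i = (if i = a' then 1 else 0) + (if i = b' then 1 else 0))
    (D : Finset (Fin m)) (hD : D ∈ 𝒟) :
    (restrictC I D a = restrictC I D a' ∧ restrictC I D b = restrictC I D b') ∨
    (restrictC I D a = restrictC I D b' ∧ restrictC I D b = restrictC I D a') := by
  apply pair_eq_aux
  intro g
  rw [← margin_pair I D p a b ha g, ← margin_pair I D q a' b' hb g, hp D hD g, hq D hD g]

/-- Lemma 1: if `Γ` is a subset of a single connected component of the
induced subgraph `G(Δ̄_b)`, then the `Γ`-marginal is uniquely determined by `b`. -/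
theorem statement2 (I : Fin m → ℕ) (hI : ∀ δ, 2 ≤ I δ)
    (𝒟 : Finset (Finset (Fin m))) (hcov : ∀ δ : Fin m, ∃ D ∈ 𝒟, δ ∈ D)
    (n₀ : Cell I → ℕ)
    (hdeg : ∀ n ∈ fiber I 𝒟 n₀, total I n = 2)
    (Γ : Finset (Fin m)) (hΓ : ∀ δ ∈ Γ, δ ∈ ndSet I n₀)
    (hconn : ∀ (a : Fin m) (ha : a ∈ Γ) (b : Fin m) (hb : b ∈ Γ),
      ((indepGraph 𝒟).induce (ndSet I n₀)).Reachable ⟨a, hΓ a ha⟩ ⟨b, hΓ b hb⟩) :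
    ∀ n ∈ fiber I 𝒟 n₀, ∀ n' ∈ fiber I 𝒟 n₀,
      ∀ f : PCell I Γ, margin I n Γ f = margin I n' Γ f := by
  classical
  intro n hn n' hn' f
  have hfib0 : n₀ ∈ fiber I 𝒟 n₀ := fun D hD g => rfl
  obtain ⟨x, y, hxy⟩ := exists_pair_aux n (by simpa [total] using hdeg n hn)
  obtain ⟨x', y', hxy'⟩ := exists_pair_aux n' (by simpa [total] using hdeg n' hn')
  obtain ⟨x₀, y₀, hxy₀⟩ := exists_pair_aux n₀ (by simpa [total] using hdeg n₀ hfib0)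
  -- pointwise disjunctions at every variable
  have ptwise : ∀ (p q : Cell I → ℕ), p ∈ fiber I 𝒟 n₀ → q ∈ fiber I 𝒟 n₀ →
      ∀ (a b a' b' : Cell I),
      (∀ i, p i = (if i = a then 1 else 0) + (if i = b then 1 else 0)) →
      (∀ i, q i = (if i = a' then 1 else 0) + (if i = b' then 1 else 0)) →
      ∀ δ : Fin m, (a δ = a' δ ∧ b δ = b' δ) ∨ (a δ = b' δ ∧ b δ = a' δ) := by
    intro p q hp hq a b a' b' ha hb δ
    obtain ⟨D, hD, hδ⟩ := hcov δ
    rcases fiber_disj I 𝒟 n₀ p q hp hq a b a' b' ha hb D hD with ⟨h1, h2⟩ | ⟨h1, h2⟩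
    · exact Or.inl ⟨congrFun h1 ⟨δ, hδ⟩, congrFun h2 ⟨δ, hδ⟩⟩
    · exact Or.inr ⟨congrFun h1 ⟨δ, hδ⟩, congrFun h2 ⟨δ, hδ⟩⟩
  have dis := ptwise n n₀ hn hfib0 x y x₀ y₀ hxy hxy₀
  have dis' := ptwise n' n₀ hn' hfib0 x' y' x₀ y₀ hxy' hxy₀
  have disNN := ptwise n n' hn hn' x y x' y' hxy hxy'
  have hx0y0 : ∀ δ ∈ ndSet I n₀, x₀ δ ≠ y₀ δ := by
    intro δ hδ heq
    obtain ⟨v, w, hvw, hv, hw⟩ := hδ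
    rw [margin1_pair I δ n₀ x₀ y₀ hxy₀ v, heq] at hv
    split_ifs at hv <;> omega
  have hx'Ne : ∀ δ ∈ ndSet I n₀, x' δ ≠ y' δ := by
    intro δ hδ
    rcases dis' δ with ⟨h1, h2⟩ | ⟨h1, h2⟩ <;> rw [h1, h2]
    · exact hx0y0 δ hδ
    · exact (hx0y0 δ hδ).symm
  have step : ∀ u v : (ndSet I n₀ : Set (Fin m)),
      ((indepGraph 𝒟).induce (ndSet I n₀)).Adj u v →
      ((x u.1 = x' u.1) ↔ (x v.1 = x' v.1)) := by
    intro u v huv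
    have hadj : (indepGraph 𝒟).Adj u.1 v.1 := huv
    rw [indepGraph, SimpleGraph.fromRel_adj] at hadj
    obtain ⟨hne, hrel⟩ := hadj
    obtain ⟨D, hD, hu, hv⟩ : ∃ D ∈ 𝒟, u.1 ∈ D ∧ v.1 ∈ D := by
      rcases hrel with ⟨D, hD, h1, h2⟩ | ⟨D, hD, h1, h2⟩
      · exact ⟨D, hD, h1, h2⟩
      · exact ⟨D, hD, h2, h1⟩
    rcases fiber_disj I 𝒟 n₀ n n' hn hn' x y x' y' hxy hxy' D hD with ⟨h1, h2⟩ | ⟨h1, h2⟩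
    · exact iff_of_true (congrFun h1 ⟨u.1, hu⟩) (congrFun h1 ⟨v.1, hv⟩)
    · refine iff_of_false ?_ ?_
      · intro hc
        exact hx'Ne u.1 u.2 (hc.symm.trans (congrFun h1 ⟨u.1, hu⟩))
      · intro hc
        exact hx'Ne v.1 v.2 (hc.symm.trans (congrFun h1 ⟨v.1, hv⟩))
  have main : (∀ δ ∈ Γ, x δ = x' δ ∧ y δ = y' δ) ∨
      (∀ δ ∈ Γ, x δ = y' δ ∧ y δ = x' δ) := by
    rcases Finset.eq_empty_or_nonempty Γ with hΓe | ⟨a, ha⟩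
    · left; intro δ hδ; rw [hΓe] at hδ; simp at hδ
    · have prop : ∀ δ (hδ : δ ∈ Γ), (x a = x' a) ↔ (x δ = x' δ) := fun δ hδ =>
        reach_iff (fun u : (ndSet I n₀ : Set (Fin m)) => x u.1 = x' u.1) step
          (hconn a ha δ hδ)
      by_cases hax : x a = x' a
      · left
        intro δ hδ
        have h1 : x δ = x' δ := (prop δ hδ).mp hax
        rcases disNN δ with ⟨g1, g2⟩ | ⟨g1, g2⟩
        · exact ⟨g1, g2⟩
        · exact absurd (h1.symm.trans g1) (hx'Ne δ (hΓ δ hδ))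
      · right
        intro δ hδ
        have h1 : ¬ x δ = x' δ := fun c => hax ((prop δ hδ).mpr c)
        rcases disNN δ with ⟨g1, g2⟩ | ⟨g1, g2⟩
        · exact absurd g1 h1
        · exact ⟨g1, g2⟩
  rcases main with hm | hm
  · have e1 : restrictC I Γ x = restrictC I Γ x' := funext fun δ => (hm δ.1 δ.2).1
    have e2 : restrictC I Γ y = restrictC I Γ y' := funext fun δ => (hm δ.1 δ.2).2
    rw [margin_pair I Γ n x y hxy f, margin_pair I Γ n' x' y' hxy' f, e1, e2]
  · have e1 : restrictC I Γ x = restrictC I Γ y' := funext fun δ => (hm δ.1 δ.2).1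
    have e2 : restrictC I Γ y = restrictC I Γ x' := funext fun δ => (hm δ.1 δ.2).2
    rw [margin_pair I Γ n x y hxy f, margin_pair I Γ n' x' y' hxy' f, e1, e2, add_comm]
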